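/- Let d = (d_1,…,d_r) be a dimension vector with d_1+⋯+d_r = n and let X(d) be the matrix associated to the horizontal line diagram L_h(d). Let D_1 ≥ D_2 ≥ ⋯ ≥ D_r be the entries of d rearranged in decreasing order. Then dim ker(X(d)^s) = D_1 + ⋯ + D_s for every 1 ≤ s ≤ r; in particular X(d)^r = 0, the Jordan canonical form of X(d) is given by the partition (1^{D_1−D_2}, 2^{D_2−D_3}, …, (r−1)^{D_{r−1}−D_r}, r^{D_r}), and the dual of the Jordan partition of X(d) is the multiset {d_1,…,d_r} of entries of the dimension vector. -/

import Mathlib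

open Matrix

def off (d : ℕ → ℕ) (c : ℕ) : ℕ := ∑ x ∈ Finset.range c, d x

/-- Lines of the horizontal line diagram `L_h(d)` (0-based labels, see the paper). -/
def IsHLine (d : ℕ → ℕ) (r : ℕ) (i j : ℕ) : Prop :=
  ∃ c c' k, c < c' ∧ c' < r ∧ k < d c ∧ k < d c' ∧
    (∀ c'', c < c'' → c'' < c' → d c'' ≤ k) ∧ i = off d c + k ∧ j = off d c' + k

open Classical in
/-- The matrix `X(d) = Σ_{lines i—j} E_{ij}` of the horizontal line diagram `L_h(d)`. -/
noncomputable def XH (d : ℕ → ℕ) (r n : ℕ) : Matrix (Fin n) (Fin n) ℂ :=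
  Matrix.of fun i j => if IsHLine d r (i : ℕ) (j : ℕ) then 1 else 0

/-- position of column `c` among columns with `k < d`. -/
def posn (d : ℕ → ℕ) (k c : ℕ) : ℕ := ((Finset.range c).filter (fun x => k < d x)).card

def Chain (d : ℕ → ℕ) (r s : ℕ) (i j : ℕ) : Prop :=
  ∃ c c' k, c ≤ c' ∧ c' < r ∧ k < d c ∧ k < d c' ∧
    ((Finset.Ico c c').filter (fun x => k < d x)).card = s ∧
    i = off d c + k ∧ j = off d c' + k

lemma off_mono (d : ℕ → ℕ) : Monotone (off d) := by
  intro a b hab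
  exact Finset.sum_le_sum_of_subset (Finset.range_subset_range.2 hab)

lemma off_succ (d : ℕ → ℕ) (c : ℕ) : off d (c + 1) = off d c + d c := by
  simp [off, Finset.sum_range_succ]

lemma enc_lt {d : ℕ → ℕ} {r c k : ℕ} (hc : c < r) (hk : k < d c) :
    off d c + k < off d r := by
  calc off d c + k < off d (c + 1) := by rw [off_succ]; omega
  _ ≤ off d r := off_mono d hc

lemma enc_inj {d : ℕ → ℕ} {c c' k k' : ℕ} (hk : k < d c) (hk' : k' < d c')
    (h : off d c + k = off d c' + k') : c = c' ∧ k = k' := by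
  rcases lt_trichotomy c c' with hlt | heq | hgt
  · have : off d c + k < off d c' := by
      calc off d c + k < off d (c+1) := by rw [off_succ]; omega
      _ ≤ off d c' := off_mono d hlt
    omega
  · subst heq; omega
  · have : off d c' + k' < off d c := by
      calc off d c' + k' < off d (c'+1) := by rw [off_succ]; omega
      _ ≤ off d c := off_mono d hgt
    omega

lemma enc_surj {d : ℕ → ℕ} : ∀ {r : ℕ} {i : ℕ}, i < off d r →
    ∃ c, c < r ∧ ∃ k, k < d c ∧ i = off d c + k := by
  intro r
  induction r with
  | zero => intro i hi; simp [off] at hi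
  | succ r ih =>
    intro i hi
    rw [off_succ] at hi
    by_cases h : i < off d r
    · obtain ⟨c, hc, k, hk, he⟩ := ih h
      exact ⟨c, by omega, k, hk, he⟩
    · exact ⟨r, by omega, i - off d r, by omega, by omega⟩
lemma chain_zero_iff {d : ℕ → ℕ} {r i j : ℕ} :
    Chain d r 0 i j ↔ (i = j ∧ i < off d r) := by
  constructor
  · rintro ⟨c, c', k, hcc, hc'r, hkc, hkc', hcard, hi, hj⟩
    have hcc' : c = c' := by
      by_contra h
      have hclt : c < c' := by omega
      have : c ∈ (Finset.Ico c c').filter (fun x => k < d x) := by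
        simp [Finset.mem_filter, Finset.mem_Ico, hclt, hkc]
      have := Finset.card_pos.2 ⟨c, this⟩
      omega
    subst hcc'
    exact ⟨by omega, by rw [hi]; exact enc_lt hc'r hkc⟩
  · rintro ⟨rfl, hi⟩
    obtain ⟨c, hc, k, hk, he⟩ := enc_surj hi
    exact ⟨c, c, k, le_refl c, hc, hk, hk, by simp, he, he⟩

lemma line_iff_chain_one {d : ℕ → ℕ} {r i j : ℕ} :
    IsHLine d r i j ↔ Chain d r 1 i j := by
  constructor
  · rintro ⟨c, c', k, hcc, hc'r, hkc, hkc', hbet, hi, hj⟩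
    refine ⟨c, c', k, le_of_lt hcc, hc'r, hkc, hkc', ?_, hi, hj⟩
    have : (Finset.Ico c c').filter (fun x => k < d x) = {c} := by
      apply Finset.eq_singleton_iff_unique_mem.2
      constructor
      · simp [Finset.mem_filter, Finset.mem_Ico, hcc, hkc]
      · intro x hx
        simp only [Finset.mem_filter, Finset.mem_Ico] at hx
        by_contra hne
        have := hbet x (by omega) hx.1.2
        omega
    rw [this]; simp
  · rintro ⟨c, c', k, hcc, hc'r, hkc, hkc', hcard, hi, hj⟩
    have hclt : c < c' := by
      rcases eq_or_lt_of_le hcc with rfl | h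
      · simp at hcard
      · exact h
    refine ⟨c, c', k, hclt, hc'r, hkc, hkc', ?_, hi, hj⟩
    intro c'' h1 h2
    by_contra h
    push_neg at h
    have hc : c ∈ (Finset.Ico c c').filter (fun x => k < d x) := by
      simp [Finset.mem_filter, Finset.mem_Ico, hclt, hkc]
    have hc'' : c'' ∈ (Finset.Ico c c').filter (fun x => k < d x) := by
      simp only [Finset.mem_filter, Finset.mem_Ico]
      exact ⟨⟨by omega, h2⟩, h⟩
    have : ({c, c''} : Finset ℕ) ⊆ (Finset.Ico c c').filter (fun x => k < d x) := by
      intro x hx; simp at hx; rcases hx with rfl | rfl <;> assumption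
    have hle := Finset.card_le_card this
    rw [Finset.card_insert_of_notMem (by simp; omega), Finset.card_singleton] at hle
    omega

lemma line_pred_unique {d : ℕ → ℕ} {r m m' j : ℕ}
    (h : IsHLine d r m j) (h' : IsHLine d r m' j) : m = m' := by
  obtain ⟨c, c', k, hcc, hc'r, hkc, hkc', hbet, hi, hj⟩ := h
  obtain ⟨e, e', l, hee, he'r, hle, hle', hbet', hi', hj'⟩ := h'
  obtain ⟨rfl, rfl⟩ := enc_inj hkc' hle' (hj ▸ hj')
  rcases lt_trichotomy c e with hlt | rfl | hgt
  · exact absurd (hbet e hlt hee) (by omega)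
  · omega
  · exact absurd (hbet' c hgt hcc) (by omega)

lemma chain_succ_unique {d : ℕ → ℕ} {r s i j j' : ℕ}
    (h : Chain d r s i j) (h' : Chain d r s i j') : j = j' := by
  obtain ⟨c, c', k, hcc, hc'r, hkc, hkc', hcard, hi, hj⟩ := h
  obtain ⟨e, e', l, hee, he'r, hle, hle', hcard', hi', hj'⟩ := h'
  obtain ⟨rfl, rfl⟩ := enc_inj hkc hle (hi ▸ hi')
  have key : ∀ x y : ℕ, x < y → c ≤ x → k < d x →
      ((Finset.Ico c x).filter (fun t => k < d t)).card = s →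
      ((Finset.Ico c y).filter (fun t => k < d t)).card = s → False := by
    intro x y hlt hcx hkx hx hy
    have hsub : insert x ((Finset.Ico c x).filter (fun t => k < d t)) ⊆
        (Finset.Ico c y).filter (fun t => k < d t) := by
      intro z hz
      rcases Finset.mem_insert.1 hz with rfl | hz
      · simp only [Finset.mem_filter, Finset.mem_Ico]
        exact ⟨⟨hcx, hlt⟩, hkx⟩
      · simp only [Finset.mem_filter, Finset.mem_Ico] at hz ⊢
        exact ⟨⟨hz.1.1, by omega⟩, hz.2⟩
    have hle2 := Finset.card_le_card hsub
    rw [Finset.card_insert_of_notMem (by simp [Finset.mem_Ico])] at hle2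
    omega
  have : c' = e' := by
    rcases lt_trichotomy c' e' with h | h | h
    · exact absurd (key c' e' h hcc hkc' hcard hcard') (by simp)
    · exact h
    · exact absurd (key e' c' h hee hle' hcard' hcard) (by simp)
  subst this
  omega

lemma chain_succ_iff {d : ℕ → ℕ} {r s i j : ℕ} :
    Chain d r (s+1) i j ↔ ∃ m, Chain d r s i m ∧ IsHLine d r m j := by
  constructor
  · rintro ⟨c, c', k, hcc, hc'r, hkc, hkc', hcard, hi, hj⟩
    set F := (Finset.Ico c c').filter (fun x => k < d x) with hF
    have hne : F.Nonempty := Finset.card_pos.1 (by omega)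
    set c₁ := F.max' hne with hc₁
    have hc₁F : c₁ ∈ F := F.max'_mem hne
    simp only [hF, Finset.mem_filter, Finset.mem_Ico] at hc₁F
    refine ⟨off d c₁ + k, ⟨c, c₁, k, hc₁F.1.1, by omega, hkc, hc₁F.2, ?_, hi, rfl⟩,
      ⟨c₁, c', k, hc₁F.1.2, hc'r, hc₁F.2, hkc', ?_, rfl, hj⟩⟩
    · -- card of filter Ico c c₁ = s
      have hsplit : F = insert c₁ ((Finset.Ico c c₁).filter (fun x => k < d x)) := by
        apply Finset.ext
        intro x
        simp only [hF, Finset.mem_insert, Finset.mem_filter, Finset.mem_Ico]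
        constructor
        · intro hx
          by_cases hxc : x = c₁
          · exact Or.inl hxc
          · have hxlt : x < c₁ := by
              have : x ≤ c₁ := F.le_max' x (by simpa [hF, Finset.mem_filter, Finset.mem_Ico] using hx)
              omega
            exact Or.inr ⟨⟨hx.1.1, hxlt⟩, hx.2⟩
        · rintro (rfl | hx)
          · exact ⟨⟨hc₁F.1.1, hc₁F.1.2⟩, hc₁F.2⟩
          · exact ⟨⟨hx.1.1, by omega⟩, hx.2⟩
      have hnotmem : c₁ ∉ (Finset.Ico c c₁).filter (fun x => k < d x) := by
        simp [Finset.mem_Ico]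
      rw [hsplit, Finset.card_insert_of_notMem hnotmem] at hcard
      omega
    · -- betweenness for the line c₁ -- c'
      intro c'' h1 h2
      by_contra h
      push_neg at h
      have : c'' ∈ F := by
        simp only [hF, Finset.mem_filter, Finset.mem_Ico]
        exact ⟨⟨by omega, h2⟩, h⟩
      have := F.le_max' c'' this
      omega
  · rintro ⟨m, ⟨c, c₁, k, hcc, hc₁r, hkc, hkc₁, hcard, hi, hm⟩,
      ⟨e, c', l, hee, hc'r, hle, hlc', hbet, hm', hj⟩⟩
    obtain ⟨rfl, rfl⟩ := enc_inj hkc₁ hle (hm ▸ hm')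
    refine ⟨c, c', k, by omega, hc'r, hkc, hlc', ?_, hi, hj⟩
    have hsplit : (Finset.Ico c c').filter (fun x => k < d x) =
        insert c₁ ((Finset.Ico c c₁).filter (fun x => k < d x)) := by
      apply Finset.ext
      intro x
      simp only [Finset.mem_insert, Finset.mem_filter, Finset.mem_Ico]
      constructor
      · intro hx
        by_cases hxe : x = c₁
        · exact Or.inl hxe
        · rcases lt_or_gt_of_ne hxe with hlt | hgt
          · exact Or.inr ⟨⟨hx.1.1, hlt⟩, hx.2⟩
          · exact absurd (hbet x hgt hx.1.2) (by omega)
      · rintro (rfl | hx)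
        · exact ⟨⟨hcc, hee⟩, hkc₁⟩
        · exact ⟨⟨hx.1.1, by omega⟩, hx.2⟩
    rw [hsplit, Finset.card_insert_of_notMem (by simp [Finset.mem_Ico]), hcard]
open Classical in
lemma pow_entry {d : ℕ → ℕ} {r n : ℕ} (hn : ∑ c ∈ Finset.range r, d c = n) :
    ∀ (s : ℕ) (i j : Fin n),
      (XH d r n ^ s) i j = if Chain d r s (i : ℕ) (j : ℕ) then 1 else 0 := by
  have hoff : off d r = n := hn
  intro s
  induction s with
  | zero =>
    intro i j
    rw [pow_zero]
    rw [Matrix.one_apply]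
    by_cases h : i = j
    · subst h
      rw [if_pos rfl, if_pos (chain_zero_iff.2 ⟨rfl, by rw [hoff]; exact i.2⟩)]
    · rw [if_neg h, if_neg]
      intro hc
      exact h (Fin.ext (chain_zero_iff.1 hc).1)
  | succ s ih =>
    intro i j
    rw [pow_succ, Matrix.mul_apply]
    have hterm : ∀ m : Fin n, (XH d r n ^ s) i m * XH d r n m j =
        if (Chain d r s (i : ℕ) (m : ℕ) ∧ IsHLine d r (m : ℕ) (j : ℕ)) then 1 else 0 := by
      intro m
      rw [ih i m]
      show _ * (if IsHLine d r (m : ℕ) (j : ℕ) then (1:ℂ) else 0) = _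
      by_cases h1 : Chain d r s (i : ℕ) (m : ℕ) <;>
        by_cases h2 : IsHLine d r (m : ℕ) (j : ℕ) <;>
        simp [h1, h2]
    simp only [hterm]
    by_cases h : ∃ m : Fin n, Chain d r s (i : ℕ) (m : ℕ) ∧ IsHLine d r (m : ℕ) (j : ℕ)
    · obtain ⟨m₀, hm₀⟩ := h
      rw [Finset.sum_eq_single m₀]
      · rw [if_pos hm₀, if_pos]
        exact chain_succ_iff.2 ⟨(m₀ : ℕ), hm₀⟩
      · intro m _ hne
        rw [if_neg]
        rintro ⟨h1, h2⟩
        have : (m : ℕ) = (m₀ : ℕ) := chain_succ_unique h1 hm₀.1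
        exact hne (Fin.ext this)
      · intro habs; exact absurd (Finset.mem_univ m₀) habs
    · rw [Finset.sum_eq_zero, if_neg]
      · intro hc
        obtain ⟨m, h1, h2⟩ := chain_succ_iff.1 hc
        have hmn : m < n := by
          obtain ⟨c, c', k, _, hc'r, _, hkc', _, _, hm⟩ := h1
          rw [hm, ← hoff]
          exact enc_lt hc'r hkc'
        exact h ⟨⟨m, hmn⟩, h1, h2⟩
      · intro m _
        rw [if_neg]
        intro hc
        exact h ⟨m, hc⟩

lemma XH_pow_eq_zero {d : ℕ → ℕ} {r n : ℕ} (hn : ∑ c ∈ Finset.range r, d c = n) :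
    XH d r n ^ r = 0 := by
  ext i j
  rw [pow_entry hn r i j]
  rw [if_neg, Matrix.zero_apply]
  rintro ⟨c, c', k, hcc, hc'r, _, _, hcard, _, _⟩
  have h1 : ((Finset.Ico c c').filter (fun x => k < d x)).card ≤ (Finset.Ico c c').card :=
    Finset.card_le_card (Finset.filter_subset _ _)
  rw [Nat.card_Ico] at h1
  omega
noncomputable def ESingle (n : ℕ) (j : Fin n) : Fin n → ℂ := Pi.single j 1

open Classical in
lemma ker_eq_span {d : ℕ → ℕ} {r n : ℕ} (hn : ∑ c ∈ Finset.range r, d c = n) (s : ℕ) :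
    LinearMap.ker ((XH d r n ^ s).mulVecLin) =
    Submodule.span ℂ (Set.range
      (fun j : {j : Fin n // ¬ ∃ i : Fin n, Chain d r s (i : ℕ) (j : ℕ)} =>
        ESingle n (j : Fin n))) := by
  apply le_antisymm
  · intro v hv
    rw [LinearMap.mem_ker, Matrix.mulVecLin_apply] at hv
    have hv0 : ∀ j : Fin n, (∃ i : Fin n, Chain d r s (i : ℕ) (j : ℕ)) → v j = 0 := by
      rintro j ⟨i, hij⟩
      have h1 : ∑ j' : Fin n, (XH d r n ^ s) i j' * v j' = 0 := by
        have := congrFun hv i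
        simpa [Matrix.mulVec, dotProduct] using this
      have h2 : ∑ j' : Fin n, (XH d r n ^ s) i j' * v j' = v j := by
        rw [Finset.sum_eq_single j]
        · rw [pow_entry hn s i j, if_pos hij, one_mul]
        · intro j' _ hne
          rw [pow_entry hn s i j', if_neg, zero_mul]
          intro hc
          exact hne (Fin.ext (chain_succ_unique hc hij))
        · intro h; exact absurd (Finset.mem_univ j) h
      rw [h2] at h1
      exact h1
    have hrepr : v = ∑ j : Fin n, Pi.single j (v j) := (Finset.univ_sum_single v).symm
    rw [hrepr]
    apply Submodule.sum_mem
    intro j _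
    by_cases hQ : ∃ i : Fin n, Chain d r s (i : ℕ) (j : ℕ)
    · rw [hv0 j hQ]; simp
    · have h3 : Pi.single j (v j) = v j • ESingle n j := by
        ext t
        by_cases h : t = j <;> simp [ESingle, Pi.single_apply, h]
      rw [h3]
      exact Submodule.smul_mem _ _ (Submodule.subset_span ⟨⟨j, hQ⟩, rfl⟩)
  · rw [Submodule.span_le]
    rintro _ ⟨⟨j, hQ⟩, rfl⟩
    rw [SetLike.mem_coe, LinearMap.mem_ker, Matrix.mulVecLin_apply]
    show (XH d r n ^ s).mulVec (Pi.single j 1) = 0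
    rw [Matrix.mulVec_single]
    funext i
    show (XH d r n ^ s) i j * 1 = 0
    have hnc : ¬ Chain d r s (i : ℕ) (j : ℕ) := fun hc => hQ ⟨i, hc⟩
    rw [mul_one, pow_entry hn s i j, if_neg hnc]

open Classical in
lemma finrank_ker_pow {d : ℕ → ℕ} {r n : ℕ} (hn : ∑ c ∈ Finset.range r, d c = n) (s : ℕ) :
    Module.finrank ℂ (LinearMap.ker ((XH d r n ^ s).mulVecLin)) =
    (Finset.univ.filter
      (fun j : Fin n => ¬ ∃ i : Fin n, Chain d r s (i : ℕ) (j : ℕ))).card := by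
  rw [ker_eq_span hn s]
  have hli : LinearIndependent ℂ
      (fun j : {j : Fin n // ¬ ∃ i : Fin n, Chain d r s (i : ℕ) (j : ℕ)} =>
        ESingle n (j : Fin n)) := by
    have := (Pi.basisFun ℂ (Fin n)).linearIndependent.comp
      (fun j : {j : Fin n // ¬ ∃ i : Fin n, Chain d r s (i : ℕ) (j : ℕ)} => (j : Fin n))
      Subtype.val_injective
    have he : (fun j : {j : Fin n // ¬ ∃ i : Fin n, Chain d r s (i : ℕ) (j : ℕ)} =>
        ESingle n (j : Fin n)) = (⇑(Pi.basisFun ℂ (Fin n)) ∘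
        fun j : {j : Fin n // ¬ ∃ i : Fin n, Chain d r s (i : ℕ) (j : ℕ)} => (j : Fin n)) := by
      funext j
      simp [ESingle, Function.comp, Pi.basisFun_apply]
    rw [he]
    exact this
  rw [finrank_span_eq_card hli, Fintype.card_subtype]
lemma exists_rank (p : ℕ → Prop) [DecidablePred p] :
    ∀ N t, t < ((Finset.range N).filter p).card →
      ∃ c, c < N ∧ p c ∧ ((Finset.range c).filter p).card = t := by
  intro N
  induction N with
  | zero => intro t ht; simp at ht
  | succ N ih =>
    intro t ht
    by_cases h : t < ((Finset.range N).filter p).card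
    · obtain ⟨c, h1, h2, h3⟩ := ih t h
      exact ⟨c, by omega, h2, h3⟩
    · rw [Finset.range_add_one, Finset.filter_insert] at ht
      by_cases hp : p N
      · rw [if_pos hp, Finset.card_insert_of_notMem (by simp)] at ht
        exact ⟨N, by omega, hp, by omega⟩
      · rw [if_neg hp] at ht; omega

lemma posn_lt_of_mem {d : ℕ → ℕ} {k c c' : ℕ} (hp : k < d c) (h : c < c') :
    posn d k c < posn d k c' := by
  apply Finset.card_lt_card
  rw [Finset.ssubset_iff_of_subset
    (Finset.filter_subset_filter _ (Finset.range_subset_range.2 (by omega)))]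
  exact ⟨c, by simp [Finset.mem_filter, Finset.mem_range, h, hp], by simp⟩

lemma posn_split {d : ℕ → ℕ} {k c c' : ℕ} (h : c ≤ c') :
    posn d k c' = posn d k c + ((Finset.Ico c c').filter (fun x => k < d x)).card := by
  unfold posn
  rw [Finset.range_eq_Ico,
    ← Finset.Ico_union_Ico_eq_Ico (Nat.zero_le c) h, Finset.filter_union,
    Finset.card_union_of_disjoint]
  · rw [Finset.range_eq_Ico]
  exact Disjoint.mono (Finset.filter_subset (fun x => k < d x) _)
    (Finset.filter_subset (fun x => k < d x) _)
    (Finset.Ico_disjoint_Ico_consecutive 0 c c')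

lemma chain_exists_iff {d : ℕ → ℕ} {r s c' k : ℕ} (hc' : c' < r) (hk : k < d c') :
    (∃ i, Chain d r s i (off d c' + k)) ↔ s ≤ posn d k c' := by
  classical
  constructor
  · rintro ⟨i, c, e, l, hce, her, hlc, hle, hcard, hi, hj⟩
    obtain ⟨rfl, rfl⟩ := enc_inj hle hk hj.symm
    rw [posn_split hce]
    omega
  · intro hs
    rcases Nat.eq_zero_or_pos s with rfl | hspos
    · exact ⟨off d c' + k, c', c', k, le_refl _, hc', hk, hk, by simp, rfl, rfl⟩
    · have ht : posn d k c' - s < ((Finset.range c').filter (fun x => k < d x)).card := by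
        unfold posn at hs ⊢; omega
      obtain ⟨c, hcc', hpc, hrank⟩ :=
        exists_rank (fun x => k < d x) c' (posn d k c' - s) ht
      refine ⟨off d c + k, c, c', k, by omega, hc', hpc, hk, ?_, rfl, rfl⟩
      have := posn_split (d := d) (k := k) (c := c) (c' := c') (le_of_lt hcc')
      unfold posn at this hrank hs
      omega

lemma count_k {d : ℕ → ℕ} (r s k : ℕ) :
    ((Finset.range r).filter (fun c => k < d c ∧ posn d k c < s)).card
      = min s ((Finset.range r).filter (fun c => k < d c)).card := by
  classical
  set m := ((Finset.range r).filter (fun c => k < d c)).card with hm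
  rw [show min s m = (Finset.range (min s m)).card by simp]
  apply Finset.card_bij (fun c _ => posn d k c)
  · intro c hc
    simp only [Finset.mem_filter, Finset.mem_range] at hc
    simp only [Finset.mem_range, lt_min_iff]
    refine ⟨hc.2.2, ?_⟩
    rw [hm]
    exact posn_lt_of_mem hc.2.1 hc.1
  · intro c hc c2 hc2 heq
    simp only [Finset.mem_filter, Finset.mem_range] at hc hc2
    by_contra hne
    rcases lt_or_gt_of_ne hne with h | h
    · have := posn_lt_of_mem hc.2.1 h; omega
    · have := posn_lt_of_mem hc2.2.1 h; omega
  · intro t ht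
    simp only [Finset.mem_range, lt_min_iff] at ht
    obtain ⟨c, hcr, hpc, hrank⟩ := exists_rank (fun x => k < d x) r t (by omega)
    refine ⟨c, ?_, ?_⟩
    · simp only [Finset.mem_filter, Finset.mem_range]
      exact ⟨hcr, hpc, by unfold posn; omega⟩
    · exact hrank

lemma downward_closed_eq_range {S : Finset ℕ} (h : ∀ i j, i ≤ j → j ∈ S → i ∈ S) :
    S = Finset.range S.card := by
  ext i
  simp only [Finset.mem_range]
  constructor
  · intro hi
    have hsub : Finset.range (i + 1) ⊆ S := by
      intro x hx
      exact h x i (by simp only [Finset.mem_range] at hx; omega) hi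
    have := Finset.card_le_card hsub
    simp only [Finset.card_range] at this
    omega
  · intro hi
    by_contra hns
    have hsub : S ⊆ Finset.range i := by
      intro j hj
      simp only [Finset.mem_range]
      by_contra hge
      push_neg at hge
      exact hns (h i j hge hj)
    have := Finset.card_le_card hsub
    simp only [Finset.card_range] at this
    omega
lemma d_le_n {d : ℕ → ℕ} {r n : ℕ} (hn : ∑ c ∈ Finset.range r, d c = n) {c : ℕ}
    (hc : c < r) : d c ≤ n := by
  rw [← hn]
  exact Finset.single_le_sum (fun i _ => Nat.zero_le (d i)) (Finset.mem_range.2 hc)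

open Classical in
lemma count_total {d : ℕ → ℕ} {r n : ℕ} (hn : ∑ c ∈ Finset.range r, d c = n) (s : ℕ) :
    (Finset.univ.filter
      (fun j : Fin n => ¬ ∃ i : Fin n, Chain d r s (i : ℕ) (j : ℕ))).card
      = ∑ k ∈ Finset.range n,
          ((Finset.range r).filter (fun c => k < d c ∧ posn d k c < s)).card := by
  have hoff : off d r = n := hn
  -- step 1 : pass to ℕ-valued indices
  have h1 : (Finset.univ.filter
      (fun j : Fin n => ¬ ∃ i : Fin n, Chain d r s (i : ℕ) (j : ℕ))).card
      = ((Finset.range n).filter (fun j => ¬ ∃ i : ℕ, Chain d r s i j)).card := by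
    apply Finset.card_bij (fun (j : Fin n) _ => (j : ℕ))
    · intro j hj
      simp only [Finset.mem_filter, Finset.mem_univ, true_and] at hj
      simp only [Finset.mem_filter, Finset.mem_range]
      refine ⟨j.2, ?_⟩
      rintro ⟨i, hi⟩
      have hin : i < n := by
        obtain ⟨c, c', k, _, hc'r, hkc, _, _, hi2, _⟩ := hi
        rw [hi2, ← hoff]
        exact enc_lt (by omega) hkc
      exact hj ⟨⟨i, hin⟩, hi⟩
    · intro a _ b _ h
      exact Fin.ext h
    · intro j hj
      simp only [Finset.mem_filter, Finset.mem_range] at hj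
      refine ⟨⟨j, hj.1⟩, ?_, rfl⟩
      simp only [Finset.mem_filter, Finset.mem_univ, true_and]
      rintro ⟨i, hi⟩
      exact hj.2 ⟨(i : ℕ), hi⟩
  rw [h1, ← Finset.card_sigma]
  symm
  apply Finset.card_bij (fun (p : (_ : ℕ) × ℕ) _ => off d p.2 + p.1)
  · rintro ⟨k, c⟩ hp
    simp only [Finset.mem_sigma, Finset.mem_filter, Finset.mem_range] at hp
    obtain ⟨hkn, hcr, hkd, hpos⟩ := hp
    simp only [Finset.mem_filter, Finset.mem_range]
    constructor
    · rw [← hoff]; exact enc_lt hcr hkd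
    · intro hex
      have := (chain_exists_iff hcr hkd).1 hex
      omega
  · rintro ⟨k, c⟩ hp ⟨k', c'⟩ hp' heq
    simp only [Finset.mem_sigma, Finset.mem_filter, Finset.mem_range] at hp hp'
    obtain ⟨rfl, rfl⟩ := enc_inj hp.2.2.1 hp'.2.2.1 heq
    rfl
  · intro j hj
    simp only [Finset.mem_filter, Finset.mem_range] at hj
    obtain ⟨c, hcr, k, hkd, he⟩ := enc_surj (r := r) (by omega : j < off d r)
    refine ⟨⟨k, c⟩, ?_, he.symm⟩
    simp only [Finset.mem_sigma, Finset.mem_filter, Finset.mem_range]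
    refine ⟨by have := d_le_n hn hcr; omega, hcr, hkd, ?_⟩
    by_contra hpos
    push_neg at hpos
    exact hj.2 (he ▸ (chain_exists_iff hcr hkd).2 hpos)

lemma mk_perm {d D : ℕ → ℕ} {r : ℕ} (σ : Equiv.Perm (Fin r))
    (hσ : ∀ i : Fin r, D (i : ℕ) = d ((σ i : Fin r) : ℕ)) (k : ℕ) :
    ((Finset.range r).filter (fun c => k < d c)).card
      = ((Finset.range r).filter (fun i => k < D i)).card := by
  classical
  rw [Finset.card_filter, Finset.card_filter, ← Fin.sum_univ_eq_sum_range,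
    ← Fin.sum_univ_eq_sum_range,
    ← Equiv.sum_comp σ (fun j : Fin r => if k < d (j : ℕ) then 1 else 0)]
  congr 1
  funext i
  rw [← hσ i]

lemma sum_D_eq {d D : ℕ → ℕ} {r n : ℕ} (hn : ∑ c ∈ Finset.range r, d c = n)
    (σ : Equiv.Perm (Fin r))
    (hσ : ∀ i : Fin r, D (i : ℕ) = d ((σ i : Fin r) : ℕ)) :
    ∑ i ∈ Finset.range r, D i = n := by
  rw [← Fin.sum_univ_eq_sum_range]
  calc ∑ i : Fin r, D (i : ℕ) = ∑ i : Fin r, d ((σ i : Fin r) : ℕ) := by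
        exact Finset.sum_congr rfl (fun i _ => hσ i)
    _ = ∑ i : Fin r, d (i : ℕ) := Equiv.sum_comp σ (fun j : Fin r => d (j : ℕ))
    _ = n := by rw [Fin.sum_univ_eq_sum_range, hn]

lemma filter_range_s_card {D : ℕ → ℕ} {r s k : ℕ}
    (hdec : ∀ i j, i ≤ j → j < r → D j ≤ D i) (hs : s ≤ r) :
    ((Finset.range s).filter (fun i => k < D i)).card
      = min s ((Finset.range r).filter (fun i => k < D i)).card := by
  classical
  have hdc : ∀ i j, i ≤ j → j ∈ (Finset.range r).filter (fun i => k < D i) →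
      i ∈ (Finset.range r).filter (fun i => k < D i) := by
    intro i j hij hj
    simp only [Finset.mem_filter, Finset.mem_range] at hj ⊢
    have := hdec i j hij hj.1
    exact ⟨by omega, by omega⟩
  have hR := downward_closed_eq_range hdc
  have : (Finset.range s).filter (fun i => k < D i)
      = Finset.range (min s ((Finset.range r).filter (fun i => k < D i)).card) := by
    ext i
    simp only [Finset.mem_filter, Finset.mem_range, lt_min_iff]
    constructor
    · intro ⟨h1, h2⟩
      refine ⟨h1, ?_⟩
      have : i ∈ (Finset.range r).filter (fun i => k < D i) := by
        simp only [Finset.mem_filter, Finset.mem_range]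
        exact ⟨by omega, h2⟩
      rw [hR] at this
      simpa using this
    · intro ⟨h1, h2⟩
      refine ⟨h1, ?_⟩
      have : i ∈ (Finset.range r).filter (fun i => k < D i) := by
        rw [hR]; simpa using h2
      simp only [Finset.mem_filter] at this
      exact this.2
  rw [this, Finset.card_range]

lemma sum_swap_D {D : ℕ → ℕ} {n s : ℕ} (hDn : ∀ i, i < s → D i ≤ n) :
    ∑ k ∈ Finset.range n, ((Finset.range s).filter (fun i => k < D i)).card
      = ∑ i ∈ Finset.range s, D i := by
  classical
  have h1 : ∀ k, ((Finset.range s).filter (fun i => k < D i)).card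
      = ∑ i ∈ Finset.range s, if k < D i then 1 else 0 := fun k => Finset.card_filter _ _
  simp only [h1]
  rw [Finset.sum_comm]
  apply Finset.sum_congr rfl
  intro i hi
  simp only [Finset.mem_range] at hi
  rw [← Finset.card_filter]
  have : (Finset.range n).filter (fun k => k < D i) = Finset.range (D i) := by
    ext k
    simp only [Finset.mem_filter, Finset.mem_range]
    have := hDn i hi
    omega
  rw [this, Finset.card_range]
/-- Let `D 0 ≥ D 1 ≥ ⋯ ≥ D (r−1)` be the entries of the dimension vector `d` rearranged in
decreasing order (extended by `0`). Then, writing `b s = dim ker (X(d)^s)`: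
`b s = D 0 + ⋯ + D (s−1)` for `1 ≤ s ≤ r`; `X(d)^r = 0`; the Jordan canonical form of
`X(d)` has exactly `2 b s − b (s−1) − b (s+1) = D (s−1) − D s` blocks of size `s`
(the partition `(1^{D_1−D_2}, …, r^{D_r})`); and the parts
`b s − b (s−1) = D (s−1)` of the dual Jordan partition are the entries of `d`. -/
theorem kernel_dims_of_XH (r n : ℕ) (d D : ℕ → ℕ)
    (hd : ∀ c, c < r → 0 < d c) (hn : ∑ c ∈ Finset.range r, d c = n)
    (hperm : ∃ σ : Equiv.Perm (Fin r), ∀ i : Fin r, D (i : ℕ) = d ((σ i : Fin r) : ℕ))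
    (hdec : ∀ i j, i ≤ j → j < r → D j ≤ D i)
    (hD0 : ∀ i, r ≤ i → D i = 0)
    (b : ℕ → ℕ)
    (hb : ∀ s, b s = Module.finrank ℂ (LinearMap.ker ((XH d r n ^ s).mulVecLin))) :
    (∀ s, 1 ≤ s → s ≤ r → b s = ∑ i ∈ Finset.range s, D i) ∧
    XH d r n ^ r = 0 ∧
    (∀ s, 1 ≤ s → s ≤ r → 2 * b s - b (s - 1) - b (s + 1) = D (s - 1) - D s) ∧
    (∀ s, 1 ≤ s → s ≤ r → b s - b (s - 1) = D (s - 1)) := by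
  classical
  obtain ⟨σ, hσ⟩ := hperm
  have hb' : ∀ s, s ≤ r → b s = ∑ i ∈ Finset.range s, D i := by
    intro s hs
    rw [hb, finrank_ker_pow hn s, count_total hn s]
    have hstep : ∀ k ∈ Finset.range n,
        ((Finset.range r).filter (fun c => k < d c ∧ posn d k c < s)).card
        = ((Finset.range s).filter (fun i => k < D i)).card := by
      intro k _
      rw [count_k r s k, mk_perm σ hσ k, filter_range_s_card hdec hs]
    rw [Finset.sum_congr rfl hstep, sum_swap_D]
    intro i hi
    have hir : i < r := by omega
    have hDi : D i = d ((σ ⟨i, hir⟩ : Fin r) : ℕ) := by simpa using hσ ⟨i, hir⟩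
    rw [hDi]
    exact d_le_n hn (σ ⟨i, hir⟩).2
  have hz : XH d r n ^ r = 0 := XH_pow_eq_zero hn
  have hbr1 : b (r + 1) = n := by
    rw [hb]
    have h0 : XH d r n ^ (r + 1) = 0 := by rw [pow_succ, hz, Matrix.zero_mul]
    rw [h0]
    have h1 : (0 : Matrix (Fin n) (Fin n) ℂ).mulVecLin = 0 := by
      ext v i
      simp [Matrix.mulVecLin_apply]
    rw [h1, LinearMap.ker_zero, finrank_top]
    simp
  have hsum_n : ∑ i ∈ Finset.range r, D i = n := sum_D_eq hn σ hσ
  refine ⟨fun s _ hs => hb' s hs, hz, ?_, ?_⟩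
  · intro s h1 hs
    obtain ⟨t, rfl⟩ : ∃ t, s = t + 1 := ⟨s - 1, by omega⟩
    simp only [Nat.add_sub_cancel]
    have e1 := hb' t (by omega)
    have e2 := hb' (t + 1) (by omega)
    have esum : ∑ i ∈ Finset.range (t + 1), D i = (∑ i ∈ Finset.range t, D i) + D t :=
      Finset.sum_range_succ D t
    by_cases hlt : t + 1 < r
    · have e3 := hb' (t + 1 + 1) (by omega)
      have esum2 : ∑ i ∈ Finset.range (t + 1 + 1), D i
          = (∑ i ∈ Finset.range (t + 1), D i) + D (t + 1) := Finset.sum_range_succ D (t + 1)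
      omega
    · have hr : t + 1 = r := by omega
      have e3 : b (t + 1 + 1) = n := by rw [show t + 1 + 1 = r + 1 by omega]; exact hbr1
      have hBn : ∑ i ∈ Finset.range (t + 1), D i = n := by rw [hr]; exact hsum_n
      have hDt1 : D (t + 1) = 0 := hD0 (t + 1) (by omega)
      omega
  · intro s h1 hs
    obtain ⟨t, rfl⟩ : ∃ t, s = t + 1 := ⟨s - 1, by omega⟩
    simp only [Nat.add_sub_cancel]
    have e1 := hb' t (by omega)
    have e2 := hb' (t + 1) (by omega)
    have esum : ∑ i ∈ Finset.range (t + 1), D i = (∑ i ∈ Finset.range t, D i) + D t :=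
      Finset.sum_range_succ D t
    omega
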